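/- (Menshov–Trokhimchuk-type rigidity along the radical direction) Let Ω ⊆ E₃ be a domain convex in the direction of the line L = ℝ·l with l ∈ I, and let Φ : Ω → A₃ be continuous of the form Φ(ζ) = ρ²Φ₂(ζ) with Φ₂ : Ω → ℂ. Assume at every ζ ∈ Ω, except at most countably many, there exists Φ_*(ζ) ∈ A₃ such that lim_{δ→0⁺}(Φ(ζ+δh) − Φ(ζ))/δ = hΦ_*(ζ) holds for three vectors h₁, h₂, h₃ forming a basis of E₃ with h₃ = ±l. Then Φ₂ is constant on each intersection of Ω with a line parallel to L, i.e., Φ₂(ζ) = F₂(f(ζ)) for a continuous function F₂ on D = f(Ω). -/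

import Mathlib

noncomputable section

/-- The commutative algebra `A₃ = ℂ[ρ]/(ρ³)`, with basis `{1, ρ, ρ²}`;
an element `⟨a, b, c⟩` represents `a + b·ρ + c·ρ²`. -/
@[ext] structure A3 : Type where
  a : ℂ
  b : ℂ
  c : ℂ

namespace A3

instance : Zero A3 := ⟨⟨0, 0, 0⟩⟩
instance : One A3 := ⟨⟨1, 0, 0⟩⟩
instance : Add A3 := ⟨fun x y => ⟨x.a + y.a, x.b + y.b, x.c + y.c⟩⟩
instance : Neg A3 := ⟨fun x => ⟨-x.a, -x.b, -x.c⟩⟩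
instance : Mul A3 :=
  ⟨fun x y => ⟨x.a * y.a, x.a * y.b + x.b * y.a, x.a * y.c + x.b * y.b + x.c * y.a⟩⟩

@[simp] lemma zero_a : (0 : A3).a = 0 := rfl
@[simp] lemma zero_b : (0 : A3).b = 0 := rfl
@[simp] lemma zero_c : (0 : A3).c = 0 := rfl
@[simp] lemma one_a : (1 : A3).a = 1 := rfl
@[simp] lemma one_b : (1 : A3).b = 0 := rfl
@[simp] lemma one_c : (1 : A3).c = 0 := rfl
@[simp] lemma add_a (x y : A3) : (x + y).a = x.a + y.a := rfl
@[simp] lemma add_b (x y : A3) : (x + y).b = x.b + y.b := rfl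
@[simp] lemma add_c (x y : A3) : (x + y).c = x.c + y.c := rfl
@[simp] lemma neg_a (x : A3) : (-x).a = -x.a := rfl
@[simp] lemma neg_b (x : A3) : (-x).b = -x.b := rfl
@[simp] lemma neg_c (x : A3) : (-x).c = -x.c := rfl
@[simp] lemma mul_a (x y : A3) : (x * y).a = x.a * y.a := rfl
@[simp] lemma mul_b (x y : A3) : (x * y).b = x.a * y.b + x.b * y.a := rfl
@[simp] lemma mul_c (x y : A3) : (x * y).c = x.a * y.c + x.b * y.b + x.c * y.a := rfl

instance : CommRing A3 where
  add_assoc x y z := by ext <;> simp <;> ring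
  zero_add x := by ext <;> simp
  add_zero x := by ext <;> simp
  add_comm x y := by ext <;> simp <;> ring
  neg_add_cancel x := by ext <;> simp
  left_distrib x y z := by ext <;> simp <;> ring
  right_distrib x y z := by ext <;> simp <;> ring
  zero_mul x := by ext <;> simp
  mul_zero x := by ext <;> simp
  mul_assoc x y z := by ext <;> simp <;> ring
  one_mul x := by ext <;> simp
  mul_one x := by ext <;> simp
  mul_comm x y := by ext <;> simp <;> ring
  nsmul := fun n x => ⟨n • x.a, n • x.b, n • x.c⟩
  nsmul_zero x := by ext <;> exact AddMonoid.nsmul_zero _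
  nsmul_succ n x := by ext <;> exact AddMonoid.nsmul_succ _ _
  zsmul := fun n x => ⟨n • x.a, n • x.b, n • x.c⟩
  zsmul_zero' x := by ext <;> exact SubNegMonoid.zsmul_zero' _
  zsmul_succ' n x := by ext <;> exact SubNegMonoid.zsmul_succ' _ _
  zsmul_neg' n x := by ext <;> exact SubNegMonoid.zsmul_neg' _ _

/-- The canonical embedding `ℂ → A₃`. -/
def toA3 : ℂ →+* A3 where
  toFun r := ⟨r, 0, 0⟩
  map_one' := rfl
  map_mul' x y := by ext <;> simp
  map_zero' := rfl
  map_add' x y := by ext <;> simp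

instance : Algebra ℂ A3 := toA3.toAlgebra
instance : Algebra ℝ A3 := (toA3.comp (algebraMap ℝ ℂ)).toAlgebra

@[simp] lemma smulC_a (r : ℂ) (x : A3) : (r • x).a = r * x.a := by
  show (toA3 r * x).a = _ ; simp [toA3]
@[simp] lemma smulC_b (r : ℂ) (x : A3) : (r • x).b = r * x.b := by
  show (toA3 r * x).b = _ ; simp [toA3]
@[simp] lemma smulC_c (r : ℂ) (x : A3) : (r • x).c = r * x.c := by
  show (toA3 r * x).c = _ ; simp [toA3]
@[simp] lemma smulR_a (r : ℝ) (x : A3) : (r • x).a = (r : ℂ) * x.a := by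
  show ((toA3.comp (algebraMap ℝ ℂ)) r * x).a = _ ; simp [toA3]
@[simp] lemma smulR_b (r : ℝ) (x : A3) : (r • x).b = (r : ℂ) * x.b := by
  show ((toA3.comp (algebraMap ℝ ℂ)) r * x).b = _ ; simp [toA3]
@[simp] lemma smulR_c (r : ℝ) (x : A3) : (r • x).c = (r : ℂ) * x.c := by
  show ((toA3.comp (algebraMap ℝ ℂ)) r * x).c = _ ; simp [toA3]

/-- The nilpotent generator `ρ`. -/
def ρ : A3 := ⟨0, 1, 0⟩

lemma rho_sq : ρ ^ 2 = ⟨0, 0, 1⟩ := by ext <;> simp [ρ, sq]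
lemma rho_cubed : ρ ^ 3 = 0 := by ext <;> simp [ρ, pow_succ, sq]

/-- The element `a + b·ρ + c·ρ²` of `A₃`. -/
def el (a b c : ℂ) : A3 := algebraMap ℂ A3 a + b • ρ + c • ρ ^ 2

lemma el_def (a b c : ℂ) : el a b c = ⟨a, b, c⟩ := by
  simp only [el, rho_sq]; ext <;> simp [ρ] <;> simp [Algebra.algebraMap_eq_smul_one, toA3]

/-- The Euclidean norm `‖a + bρ + cρ²‖ = √(|a|² + |b|² + |c|²)`. -/
def nrm (x : A3) : ℝ :=
  Real.sqrt (‖x.a‖ ^ 2 + ‖x.b‖ ^ 2 + ‖x.c‖ ^ 2)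

/-- The topology of `A₃` (that of the Euclidean norm, i.e. of `ℂ³`). -/
instance : TopologicalSpace A3 :=
  TopologicalSpace.induced (fun x => (x.a, x.b, x.c)) inferInstance

/-- The functional `f(a + bρ + cρ²) = a`. -/
def fl (x : A3) : ℂ := x.a

/-- The set `I = {λ₁ρ + λ₂ρ² : λ₁, λ₂ ∈ ℂ}`. -/
def Iset : Set A3 := {x | ∃ l₁ l₂ : ℂ, x = l₁ • ρ + l₂ • ρ ^ 2}

/-- The kernel of `f`, i.e. the ideal `I`, as a real subspace of `A₃`. -/
def Iker : Submodule ℝ A3 where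
  carrier := {x | x.a = 0}
  add_mem' := by intro x y hx hy; simp_all [Set.mem_setOf_eq]
  zero_mem' := rfl
  smul_mem' := by intro r x hx; simp_all [Set.mem_setOf_eq]

/-- Componentwise contour integral over the circle `C(center, r)` of an `A₃`-valued function. -/
def cInt (g : ℂ → A3) (center : ℂ) (r : ℝ) : A3 :=
  ⟨∮ z in C(center, r), (g z).a, ∮ z in C(center, r), (g z).b, ∮ z in C(center, r), (g z).c⟩

end A3

-- ===== auxiliary lemmas =====

open Set Filter Topology MeasureTheory intervalIntegral


/-- one-sided slope tendsto composition helpers -/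
lemma tendsto_add_nhdsWithin (x : ℝ) :
    Tendsto (fun δ : ℝ => x + δ) (nhdsWithin 0 (Set.Ioi 0)) (nhdsWithin x {x}ᶜ) := by
  apply tendsto_nhdsWithin_of_tendsto_nhds_of_eventually_within
  · have hc : Continuous (fun δ : ℝ => x + δ) := continuous_const.add continuous_id
    simpa using (hc.tendsto 0).mono_left nhdsWithin_le_nhds
  · filter_upwards [self_mem_nhdsWithin] with δ (hδ : 0 < δ)
    simp [ne_of_gt hδ, hδ.ne']
lemma tendsto_sub_nhdsWithin (x : ℝ) :
    Tendsto (fun δ : ℝ => x - δ) (nhdsWithin 0 (Set.Ioi 0)) (nhdsWithin x {x}ᶜ) := by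
  apply tendsto_nhdsWithin_of_tendsto_nhds_of_eventually_within
  · have hc : Continuous (fun δ : ℝ => x - δ) := continuous_const.sub continuous_id
    simpa using (hc.tendsto 0).mono_left nhdsWithin_le_nhds
  · filter_upwards [self_mem_nhdsWithin] with δ (hδ : 0 < δ)
    simp [sub_eq_self, ne_of_gt hδ, hδ.ne']

lemma deriv_zero_of_onesided {f : ℝ → ℝ} {x : ℝ} (hd : DifferentiableAt ℝ f x)
    (H : Tendsto (fun δ : ℝ => δ⁻¹ * (f (x + δ) - f x)) (nhdsWithin 0 (Set.Ioi 0)) (nhds 0) ∨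
         Tendsto (fun δ : ℝ => δ⁻¹ * (f (x - δ) - f x)) (nhdsWithin 0 (Set.Ioi 0)) (nhds 0)) :
    deriv f x = 0 := by
  have hslope := hasDerivAt_iff_tendsto_slope.1 hd.hasDerivAt
  rcases H with h | h
  · have h2 : Tendsto (fun δ : ℝ => slope f x (x + δ)) (nhdsWithin 0 (Set.Ioi 0))
        (nhds (deriv f x)) := hslope.comp (tendsto_add_nhdsWithin x)
    have heq : (fun δ : ℝ => slope f x (x + δ)) = fun δ : ℝ => δ⁻¹ * (f (x + δ) - f x) := by
      funext δ; simp [slope_def_field, div_eq_inv_mul]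
    rw [heq] at h2
    exact tendsto_nhds_unique h2 h
  · have h2 : Tendsto (fun δ : ℝ => slope f x (x - δ)) (nhdsWithin 0 (Set.Ioi 0))
        (nhds (deriv f x)) := hslope.comp (tendsto_sub_nhdsWithin x)
    have heq : (fun δ : ℝ => slope f x (x - δ)) = fun δ : ℝ => -(δ⁻¹ * (f (x - δ) - f x)) := by
      funext δ
      have h3 : x - δ - x = -δ := by ring
      rw [slope_def_field, h3, div_neg, div_eq_inv_mul]
    rw [heq] at h2
    have h4 : Tendsto (fun δ : ℝ => -(δ⁻¹ * (f (x - δ) - f x))) (nhdsWithin 0 (Set.Ioi 0))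
        (nhds 0) := by simpa using h.neg
    exact tendsto_nhds_unique h2 h4

lemma lipschitz_const (f : ℝ → ℝ) (hl : LipschitzWith 1 f) (T : Set ℝ) (hT : T.Countable)
    (H : ∀ x ∉ T,
      Tendsto (fun δ : ℝ => δ⁻¹ * (f (x + δ) - f x)) (nhdsWithin 0 (Set.Ioi 0)) (nhds 0) ∨
      Tendsto (fun δ : ℝ => δ⁻¹ * (f (x - δ) - f x)) (nhdsWithin 0 (Set.Ioi 0)) (nhds 0)) :
    ∀ u v : ℝ, f u = f v := by
  have hfc : Continuous f := hl.continuous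
  -- a.e. derivative zero
  have hae : ∀ᵐ x : ℝ, deriv f x = 0 := by
    have h1 : ∀ᵐ x : ℝ, DifferentiableAt ℝ f x := hl.ae_differentiableAt
    have h2 : ∀ᵐ x : ℝ, x ∉ T := measure_eq_zero_iff_ae_notMem.1 (hT.measure_zero volume)
    filter_upwards [h1, h2] with x hd hx
    exact deriv_zero_of_onesided hd (H x hx)
  -- main step : f v - f u = 0 for all u v
  suffices hmain : ∀ u v : ℝ, f v - f u = 0 by
    intro u v; have := hmain u v; linarith
  intro u v
  set F : ℝ → ℝ := fun y => ∫ t in u..y, f t with hF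
  have hFd : ∀ y : ℝ, HasDerivAt F (f y) y := fun y =>
    integral_hasDerivAt_right (hfc.intervalIntegrable _ _)
      (hfc.stronglyMeasurable.stronglyMeasurableAtFilter) hfc.continuousAt
  set h : ℕ → ℝ := fun n => ((n : ℝ) + 1)⁻¹ with hh
  have hpos : ∀ n, 0 < h n := fun n => by positivity
  have htend : Tendsto h atTop (nhds 0) := tendsto_one_div_add_atTop_nhds_zero_nat.congr (by
    intro n; simp [hh, one_div])
  -- slope convergence for F at a point
  have slopeF : ∀ y : ℝ, Tendsto (fun n => (h n)⁻¹ * (F (y + h n) - F y)) atTop (nhds (f y)) := by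
    intro y
    have h1 := hasDerivAt_iff_tendsto_slope.1 (hFd y)
    have h2 : Tendsto (fun n => y + h n) atTop (nhdsWithin y {y}ᶜ) := by
      apply tendsto_nhdsWithin_of_tendsto_nhds_of_eventually_within
      · simpa using tendsto_const_nhds.add htend
      · exact Eventually.of_forall fun n => by simp [(hpos n).ne']
    have := h1.comp h2
    refine this.congr fun n => ?_
    simp [slope_def_field, div_eq_inv_mul]
  -- integral identity
  have hid : ∀ n, (∫ x in u..v, (h n)⁻¹ * (f (x + h n) - f x)) =
      (h n)⁻¹ * (F (v + h n) - F v) - (h n)⁻¹ * (F (u + h n) - F u) := by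
    intro n
    have hint1 : IntervalIntegrable (fun x => f (x + h n)) volume u v :=
      (hfc.comp (continuous_id.add continuous_const)).intervalIntegrable _ _
    have hint2 : IntervalIntegrable f volume u v := hfc.intervalIntegrable _ _
    rw [intervalIntegral.integral_const_mul]
    rw [intervalIntegral.integral_sub hint1 hint2]
    rw [intervalIntegral.integral_comp_add_right]
    have e1 : (∫ x in (u + h n)..(v + h n), f x) = F (v + h n) - F (u + h n) := by
      have := intervalIntegral.integral_add_adjacent_intervals
        (μ := volume) (a := u) (b := u + h n) (c := v + h n)
        (hfc.intervalIntegrable _ _) (hfc.intervalIntegrable _ _)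
      simp only [hF]
      linarith [this]
    have e2 : (∫ x in u..v, f x) = F v := rfl
    have e0 : F u = 0 := by simp [hF]
    rw [e1, e2, e0]; ring
  -- DCT
  have hdct : Tendsto (fun n => ∫ x in u..v, (h n)⁻¹ * (f (x + h n) - f x)) atTop
      (nhds (∫ x in u..v, (0 : ℝ))) := by
    apply intervalIntegral.tendsto_integral_filter_of_dominated_convergence (bound := fun _ => 1)
    · exact Eventually.of_forall fun n =>
        ((continuous_const.mul ((hfc.comp (continuous_id.add continuous_const)).sub
          hfc)).aestronglyMeasurable).restrict
    · refine Eventually.of_forall fun n => ae_of_all _ fun x _ => ?_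
      have hd : dist (f (x + h n)) (f x) ≤ dist (x + h n) x := by
        simpa using hl.dist_le_mul (x + h n) x
      rw [Real.dist_eq, Real.dist_eq] at hd
      simp only [add_sub_cancel_left, abs_of_pos (hpos n)] at hd
      rw [Real.norm_eq_abs, abs_mul, abs_inv, abs_of_pos (hpos n)]
      calc (h n)⁻¹ * |f (x + h n) - f x| ≤ (h n)⁻¹ * h n := by
            apply mul_le_mul_of_nonneg_left hd (by positivity)
        _ = 1 := inv_mul_cancel₀ (hpos n).ne'
    · exact intervalIntegrable_const
    · filter_upwards [hae, hl.ae_differentiableAt (μ := volume)] with x hx hd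
      intro _
      have h1 := hasDerivAt_iff_tendsto_slope.1 hd.hasDerivAt
      have h2 : Tendsto (fun n => x + h n) atTop (nhdsWithin x {x}ᶜ) := by
        apply tendsto_nhdsWithin_of_tendsto_nhds_of_eventually_within
        · simpa using tendsto_const_nhds.add htend
        · exact Eventually.of_forall fun n => by simp [(hpos n).ne']
      have := h1.comp h2
      rw [hx] at this
      refine this.congr fun n => ?_
      simp [slope_def_field, div_eq_inv_mul]
  rw [intervalIntegral.integral_zero] at hdct
  have hfin : Tendsto (fun n => (h n)⁻¹ * (F (v + h n) - F v) - (h n)⁻¹ * (F (u + h n) - F u))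
      atTop (nhds (f v - f u)) := (slopeF v).sub (slopeF u)
  have : Tendsto (fun n => ∫ x in u..v, (h n)⁻¹ * (f (x + h n) - f x)) atTop
      (nhds (f v - f u)) := hfin.congr fun n => (hid n).symm
  exact (tendsto_nhds_unique hdct this).symm


lemma eq_of_locallyConst_Ico {f : ℝ → ℝ} (hf : Continuous f) {a b : ℝ} (hab : a ≤ b)
    (h : ∀ z ∈ Set.Ico a b, ∀ᶠ y in nhds z, f y = f z) : f b = f a := by
  set S : Set ℝ := Set.Icc a b ∩ {y | f y = f a} with hS
  have hcl : IsClosed S := isClosed_Icc.inter (isClosed_eq hf continuous_const)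
  have hne : S.Nonempty := ⟨a, ⟨le_rfl, hab⟩, rfl⟩
  have hbdd : BddAbove S := ⟨b, fun y hy => hy.1.2⟩
  have hcS : sSup S ∈ S := hcl.csSup_mem hne hbdd
  rcases eq_or_lt_of_le hcS.1.2 with hcb | hcb
  · rw [← hcb]; exact hcS.2
  · exfalso
    have hev := h (sSup S) ⟨hcS.1.1, hcb⟩
    rcases Metric.eventually_nhds_iff.1 hev with ⟨ε, hε, hball⟩
    set y := min b (sSup S + ε/2) with hy
    have hyc : sSup S < y := lt_min hcb (by linarith)
    have hyS : y ∈ S := by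
      refine ⟨⟨le_trans hcS.1.1 hyc.le, min_le_left _ _⟩, ?_⟩
      have h1 : |y - sSup S| < ε := by
        rw [abs_of_pos (by linarith)]
        have : y ≤ sSup S + ε/2 := min_le_right _ _
        linarith
      have h2 := hball (y := y) (by rwa [Real.dist_eq])
      show f y = f a
      rw [h2, hcS.2]
    exact absurd (le_csSup hbdd hyS) (not_le.2 hyc)

lemma eq_of_locallyConst_Ioc {f : ℝ → ℝ} (hf : Continuous f) {a b : ℝ} (hab : a ≤ b)
    (h : ∀ z ∈ Set.Ioc a b, ∀ᶠ y in nhds z, f y = f z) : f b = f a := by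
  have key := eq_of_locallyConst_Ico (f := fun t => f (-t)) (hf.comp continuous_neg)
      (a := -b) (b := -a) (by linarith) ?_
  · simpa using key.symm
  · intro z hz
    have hev := h (-z) ⟨by linarith [hz.2], by linarith [hz.1]⟩
    have hcont : Tendsto (fun y : ℝ => -y) (nhds z) (nhds (-z)) := (continuous_neg.tendsto z)
    exact hcont.eventually hev

/-- Lipschitz estimate from one-sided control on the non-constancy kernel. -/
lemma lip_of_control {f : ℝ → ℝ} {K : Set ℝ} (hKclosed : IsClosed K)
    (hconst : ∀ u v : ℝ, u ≤ v → K ∩ Set.Ico u v = ∅ → f v = f u)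
    (hconst' : ∀ u v : ℝ, u ≤ v → K ∩ Set.Ioc u v = ∅ → f v = f u)
    {x₁ ε₃ : ℝ}
    (hcd : ∀ c d : ℝ, c ∈ K → d ∈ K → |c - x₁| < 2*ε₃ → |d - x₁| < 2*ε₃ → c ≤ d →
      d - c ≤ 2*ε₃ → |f d - f c| ≤ d - c) :
    ∀ u v : ℝ, |u - x₁| < ε₃ → |v - x₁| < ε₃ → u ≤ v → |f v - f u| ≤ v - u := by
  intro u v hu hv huv
  have hu' := abs_lt.1 hu
  have hv' := abs_lt.1 hv
  by_cases hdisj : K ∩ Set.Icc u v = ∅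
  · have : f v = f u := by
      apply hconst u v huv
      apply Set.eq_empty_of_subset_empty
      rw [← hdisj]
      exact Set.inter_subset_inter_right _ Set.Ico_subset_Icc_self
    rw [this, sub_self, abs_zero]; linarith
  · have hne : (K ∩ Set.Icc u v).Nonempty := Set.nonempty_iff_ne_empty.2 hdisj
    have hclosed : IsClosed (K ∩ Set.Icc u v) := hKclosed.inter isClosed_Icc
    have hbddA : BddAbove (K ∩ Set.Icc u v) := ⟨v, fun y hy => hy.2.2⟩
    have hbddB : BddBelow (K ∩ Set.Icc u v) := ⟨u, fun y hy => hy.2.1⟩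
    set c := sInf (K ∩ Set.Icc u v) with hc
    set d := sSup (K ∩ Set.Icc u v) with hd
    have hcmem : c ∈ K ∩ Set.Icc u v := hclosed.csInf_mem hne hbddB
    have hdmem : d ∈ K ∩ Set.Icc u v := hclosed.csSup_mem hne hbddA
    have hcd_le : c ≤ d := le_csSup hbddA hcmem
    have hfcu : f c = f u := by
      apply hconst u c hcmem.2.1
      ext z; simp only [Set.mem_inter_iff, Set.mem_Ico, Set.mem_empty_iff_false, iff_false]
      rintro ⟨hzK, hzu, hzc⟩
      have hzmem : z ∈ K ∩ Set.Icc u v := ⟨hzK, hzu, le_trans hzc.le (le_trans hcd_le hdmem.2.2)⟩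
      exact absurd (csInf_le hbddB hzmem) (not_le.2 hzc)
    have hfvd : f v = f d := by
      apply hconst' d v hdmem.2.2
      ext z; simp only [Set.mem_inter_iff, Set.mem_Ioc, Set.mem_empty_iff_false, iff_false]
      rintro ⟨hzK, hzd, hzv⟩
      have hzmem : z ∈ K ∩ Set.Icc u v := ⟨hzK, le_trans hcmem.2.1 (hcd_le.trans hzd.le), hzv⟩
      exact absurd (le_csSup hbddA hzmem) (not_le.2 hzd)
    have h1 : |c - x₁| < 2*ε₃ := by
      rw [abs_lt]; constructor <;> [linarith [hcmem.2.1]; linarith [hcmem.2.2]]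
    have h2 : |d - x₁| < 2*ε₃ := by
      rw [abs_lt]; constructor <;> [linarith [hdmem.2.1]; linarith [hdmem.2.2]]
    calc |f v - f u| = |f d - f c| := by rw [hfcu, hfvd]
      _ ≤ d - c := hcd c d hcmem.1 hdmem.1 h1 h2 hcd_le (by linarith [hcmem.2.1, hdmem.2.2])
      _ ≤ v - u := by linarith [hcmem.2.1, hdmem.2.2]

lemma key1d (f : ℝ → ℝ) (hf : Continuous f) (T : Set ℝ) (hT : T.Countable)
    (H : ∀ x ∉ T,
      Tendsto (fun δ : ℝ => δ⁻¹ * (f (x + δ) - f x)) (nhdsWithin 0 (Set.Ioi 0)) (nhds 0) ∨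
      Tendsto (fun δ : ℝ => δ⁻¹ * (f (x - δ) - f x)) (nhdsWithin 0 (Set.Ioi 0)) (nhds 0)) :
    ∀ u v : ℝ, f u = f v := by
  classical
  set U : Set ℝ := {x | ∀ᶠ y in nhds x, f y = f x} with hU
  have hUopen : IsOpen U := by
    rw [isOpen_iff_mem_nhds]
    intro x hx
    rcases Metric.eventually_nhds_iff.1 hx with ⟨ε, hε, hball⟩
    refine Filter.mem_of_superset (Metric.ball_mem_nhds x hε) ?_
    intro y hy
    show ∀ᶠ z in nhds y, f z = f y
    filter_upwards [(Metric.isOpen_ball).eventually_mem hy] with z hz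
    rw [hball (Metric.mem_ball.1 hz), hball (Metric.mem_ball.1 hy)]
  set K : Set ℝ := Uᶜ with hK
  have hKclosed : IsClosed K := hUopen.isClosed_compl
  have hconst : ∀ u v : ℝ, u ≤ v → K ∩ Set.Ico u v = ∅ → f v = f u := by
    intro u v huv hdisj
    refine eq_of_locallyConst_Ico hf huv fun z hz => ?_
    have : z ∉ K := fun hzK => by
      have : z ∈ K ∩ Set.Ico u v := ⟨hzK, hz⟩
      rw [hdisj] at this; exact this
    simpa [hK, hU] using not_not.1 this
  have hconst' : ∀ u v : ℝ, u ≤ v → K ∩ Set.Ioc u v = ∅ → f v = f u := by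
    intro u v huv hdisj
    refine eq_of_locallyConst_Ioc hf huv fun z hz => ?_
    have : z ∉ K := fun hzK => by
      have : z ∈ K ∩ Set.Ioc u v := ⟨hzK, hz⟩
      rw [hdisj] at this; exact this
    simpa [hK, hU] using not_not.1 this
  -- K has no isolated points
  have hiso : ∀ x ∈ K, ∀ ε > (0:ℝ), ¬ (K ∩ Metric.ball x ε ⊆ {x}) := by
    intro x hxK ε hε hsub
    apply hxK
    show ∀ᶠ y in nhds x, f y = f x
    filter_upwards [Metric.ball_mem_nhds x hε] with y hy
    have hnotK : ∀ z : ℝ, z ≠ x → z ∈ Metric.ball x ε → z ∉ K := by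
      intro z hzx hzball hzK
      exact hzx (hsub ⟨hzK, hzball⟩)
    rcases lt_trichotomy y x with hlt | heq | hgt
    · have := hconst y x hlt.le ?_
      · rw [this]
      · ext z; simp only [Set.mem_inter_iff, Set.mem_Ico, Set.mem_empty_iff_false, iff_false]
        rintro ⟨hzK, hzy, hzx⟩
        have hzball : z ∈ Metric.ball x ε := by
          rw [Metric.mem_ball, Real.dist_eq, abs_of_neg (by linarith)]
          rw [Metric.mem_ball, Real.dist_eq] at hy
          rw [abs_of_neg (by linarith)] at hy
          linarith
        exact hnotK z (ne_of_lt hzx) hzball hzK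
    · rw [heq]
    · have := hconst' x y hgt.le ?_
      · rw [this]
      · ext z; simp only [Set.mem_inter_iff, Set.mem_Ioc, Set.mem_empty_iff_false, iff_false]
        rintro ⟨hzK, hzx, hzy⟩
        have hzball : z ∈ Metric.ball x ε := by
          rw [Metric.mem_ball, Real.dist_eq, abs_of_pos (by linarith)]
          rw [Metric.mem_ball, Real.dist_eq] at hy
          rw [abs_of_pos (by linarith)] at hy
          linarith
        exact hnotK z (ne_of_gt hzx) hzball hzK
  have hKempty : K = ∅ := by
    by_contra hne
    obtain ⟨x₀, hx₀⟩ := Set.nonempty_iff_ne_empty.2 hne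
    haveI : Nonempty K := ⟨⟨x₀, hx₀⟩⟩
    haveI : CompleteSpace K := hKclosed.completeSpace_coe
    obtain ⟨u, hu⟩ := (hT.insert x₀).exists_eq_range (Set.insert_nonempty _ _)
    set CR : ℕ → Set ℝ := fun n =>
      {x | ∀ δ ∈ Set.Ioc (0:ℝ) (((n:ℝ)+1)⁻¹), |f (x + δ) - f x| ≤ δ} with hCR
    set CL : ℕ → Set ℝ := fun n =>
      {x | ∀ δ ∈ Set.Ioc (0:ℝ) (((n:ℝ)+1)⁻¹), |f (x - δ) - f x| ≤ δ} with hCL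
    have hCRclosed : ∀ n, IsClosed (CR n) := by
      intro n
      have : CR n = ⋂ δ ∈ Set.Ioc (0:ℝ) (((n:ℝ)+1)⁻¹), {x | |f (x + δ) - f x| ≤ δ} := by
        ext x; simp [hCR]
      rw [this]
      exact isClosed_biInter fun δ _ => isClosed_le
        ((hf.comp (continuous_id.add continuous_const)).sub hf).abs continuous_const
    have hCLclosed : ∀ n, IsClosed (CL n) := by
      intro n
      have : CL n = ⋂ δ ∈ Set.Ioc (0:ℝ) (((n:ℝ)+1)⁻¹), {x | |f (x - δ) - f x| ≤ δ} := by
        ext x; simp [hCL]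
      rw [this]
      exact isClosed_biInter fun δ _ => isClosed_le
        ((hf.comp (continuous_id.sub continuous_const)).sub hf).abs continuous_const
    have hmemR : ∀ x : ℝ, Tendsto (fun δ : ℝ => δ⁻¹ * (f (x + δ) - f x))
        (nhdsWithin 0 (Set.Ioi 0)) (nhds 0) → ∃ n, x ∈ CR n := by
      intro x hx
      rcases Metric.tendsto_nhdsWithin_nhds.1 hx 1 one_pos with ⟨δ₀, hδ₀, hd⟩
      rcases exists_nat_one_div_lt hδ₀ with ⟨n, hn⟩
      refine ⟨n, fun δ hδ => ?_⟩
      have h1 : dist δ 0 < δ₀ := by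
        rw [Real.dist_eq, sub_zero, abs_of_pos hδ.1]
        calc δ ≤ ((n:ℝ)+1)⁻¹ := hδ.2
          _ = 1/((n:ℝ)+1) := by rw [one_div]
          _ < δ₀ := hn
      have h2 := hd hδ.1 h1
      rw [Real.dist_eq, sub_zero, abs_mul, abs_inv, abs_of_pos hδ.1] at h2
      have h3 := mul_lt_mul_of_pos_left h2 hδ.1
      rw [← mul_assoc, mul_inv_cancel₀ hδ.1.ne', one_mul, mul_one] at h3
      exact h3.le
    have hmemL : ∀ x : ℝ, Tendsto (fun δ : ℝ => δ⁻¹ * (f (x - δ) - f x))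
        (nhdsWithin 0 (Set.Ioi 0)) (nhds 0) → ∃ n, x ∈ CL n := by
      intro x hx
      rcases Metric.tendsto_nhdsWithin_nhds.1 hx 1 one_pos with ⟨δ₀, hδ₀, hd⟩
      rcases exists_nat_one_div_lt hδ₀ with ⟨n, hn⟩
      refine ⟨n, fun δ hδ => ?_⟩
      have h1 : dist δ 0 < δ₀ := by
        rw [Real.dist_eq, sub_zero, abs_of_pos hδ.1]
        calc δ ≤ ((n:ℝ)+1)⁻¹ := hδ.2
          _ = 1/((n:ℝ)+1) := by rw [one_div]
          _ < δ₀ := hn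
      have h2 := hd hδ.1 h1
      rw [Real.dist_eq, sub_zero, abs_mul, abs_inv, abs_of_pos hδ.1] at h2
      have h3 := mul_lt_mul_of_pos_left h2 hδ.1
      rw [← mul_assoc, mul_inv_cancel₀ hδ.1.ne', one_mul, mul_one] at h3
      exact h3.le
    -- Baire category
    set G : (ℕ ⊕ ℕ ⊕ ℕ) → Set K := fun i =>
      Sum.elim (fun n => Subtype.val ⁻¹' CR n)
        (Sum.elim (fun n => Subtype.val ⁻¹' CL n) (fun n => Subtype.val ⁻¹' {u n})) i with hG
    have hGclosed : ∀ i, IsClosed (G i) := by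
      rintro (n | n | n)
      · exact (hCRclosed n).preimage continuous_subtype_val
      · exact (hCLclosed n).preimage continuous_subtype_val
      · exact isClosed_singleton.preimage continuous_subtype_val
    have hGcover : ⋃ i, G i = (Set.univ : Set K) := by
      rw [Set.eq_univ_iff_forall]
      rintro ⟨x, hxK⟩
      by_cases hxT : x ∈ T
      · have hx' : x ∈ insert x₀ T := Set.mem_insert_of_mem _ hxT
        rw [hu] at hx'
        rcases hx' with ⟨n, hn⟩
        exact Set.mem_iUnion.2 ⟨Sum.inr (Sum.inr n), by simp [hG, hn]⟩
      · rcases H x hxT with hx | hx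
        · rcases hmemR x hx with ⟨n, hn⟩
          exact Set.mem_iUnion.2 ⟨Sum.inl n, hn⟩
        · rcases hmemL x hx with ⟨n, hn⟩
          exact Set.mem_iUnion.2 ⟨Sum.inr (Sum.inl n), hn⟩
    obtain ⟨i, ⟨⟨x₁, hx₁K⟩, hx₁int⟩⟩ := nonempty_interior_of_iUnion_of_closed hGclosed hGcover
    have hx₁mem : (⟨x₁, hx₁K⟩ : K) ∈ G i := interior_subset hx₁int
    obtain ⟨ε, hε, hball⟩ := Metric.mem_nhds_iff.1 (mem_interior_iff_mem_nhds.1 hx₁int)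
    have hballK : ∀ (z : ℝ) (hz : z ∈ K), |z - x₁| < ε → (⟨z, hz⟩ : K) ∈ G i := by
      intro z hz hd
      apply hball
      rw [Metric.mem_ball, Subtype.dist_eq, Real.dist_eq]
      exact hd
    -- In each case produce a Lipschitz estimate around x₁
    have hLip : ∃ ε₃ > (0:ℝ), ∀ u v : ℝ, |u - x₁| < ε₃ → |v - x₁| < ε₃ → u ≤ v →
        |f v - f u| ≤ v - u := by
      rcases i with n | n | n
      · -- CR case
        refine ⟨(min ε (((n:ℝ)+1)⁻¹))/2, by positivity, ?_⟩
        apply lip_of_control hKclosed hconst hconst'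
        intro c d hcK hdK hcb hdb hle hlen
        rcases eq_or_lt_of_le hle with rfl | hlt
        · simp
        · have h2e : 2*((min ε (((n:ℝ)+1)⁻¹))/2) = min ε (((n:ℝ)+1)⁻¹) := by ring
          rw [h2e] at hcb hdb hlen
          have hcCR : c ∈ CR n := hballK c hcK (lt_of_lt_of_le hcb (min_le_left _ _))
          have := hcCR (d - c) ⟨by linarith, le_trans hlen (min_le_right _ _)⟩
          rwa [add_sub_cancel] at this
      · -- CL case
        refine ⟨(min ε (((n:ℝ)+1)⁻¹))/2, by positivity, ?_⟩
        apply lip_of_control hKclosed hconst hconst'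
        intro c d hcK hdK hcb hdb hle hlen
        rcases eq_or_lt_of_le hle with rfl | hlt
        · simp
        · have h2e : 2*((min ε (((n:ℝ)+1)⁻¹))/2) = min ε (((n:ℝ)+1)⁻¹) := by ring
          rw [h2e] at hcb hdb hlen
          have hdCL : d ∈ CL n := hballK d hdK (lt_of_lt_of_le hdb (min_le_left _ _))
          have := hdCL (d - c) ⟨by linarith, le_trans hlen (min_le_right _ _)⟩
          rw [sub_sub_cancel] at this
          rwa [abs_sub_comm] at this
      · -- singleton case : contradicts no isolated points
        exfalso
        apply hiso x₁ hx₁K ε hε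
        intro z ⟨hzK, hzball⟩
        have h1 : z = u n := hballK z hzK (by rwa [Metric.mem_ball, Real.dist_eq] at hzball)
        have h2 : x₁ = u n := hx₁mem
        simp [h1, h2]
    obtain ⟨ε₃, hε₃, hLip⟩ := hLip
    -- the clamped function
    set α : ℝ := x₁ - ε₃/2 with hα
    set β : ℝ := x₁ + ε₃/2 with hβ
    have hαβ : α ≤ β := by simp [hα, hβ]; linarith
    set g : ℝ → ℝ := fun t => f (max α (min t β)) with hg
    have hclamp_mem : ∀ t : ℝ, |max α (min t β) - x₁| ≤ ε₃/2 := by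
      intro t
      rw [abs_le]
      constructor
      · have : α ≤ max α (min t β) := le_max_left _ _
        simp only [hα] at this; linarith
      · have h1 : max α (min t β) ≤ β := max_le hαβ (min_le_right _ _)
        simp only [hβ] at h1; linarith
    have habs : ∀ p q : ℝ, |p - x₁| < ε₃ → |q - x₁| < ε₃ → |f p - f q| ≤ |p - q| := by
      intro p q hp hq
      rcases le_total q p with h | h
      · calc |f p - f q| ≤ p - q := hLip q p hq hp h
          _ ≤ |p - q| := le_abs_self _
      · rw [abs_sub_comm]
        calc |f q - f p| ≤ q - p := hLip p q hp hq h
          _ ≤ |p - q| := by rw [abs_sub_comm]; exact le_abs_self _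
    have hg_lip : LipschitzWith 1 g := by
      apply LipschitzWith.of_dist_le_mul
      intro s t
      simp only [NNReal.coe_one, one_mul, Real.dist_eq]
      have h1 : |f (max α (min s β)) - f (max α (min t β))| ≤ |max α (min s β) - max α (min t β)| := by
        apply habs
        · exact lt_of_le_of_lt (hclamp_mem s) (by linarith)
        · exact lt_of_le_of_lt (hclamp_mem t) (by linarith)
      have h2 : |max α (min s β) - max α (min t β)| ≤ |min s β - min t β| := by
        rw [max_comm α (min s β), max_comm α (min t β)]
        exact abs_max_sub_max_le_abs _ _ _
      have h3 : |min s β - min t β| ≤ |s - t| := by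
        calc |min s β - min t β| ≤ max |s - t| |β - β| := abs_min_sub_min_le_max _ _ _ _
          _ = |s - t| := by simp
      exact le_trans h1 (le_trans h2 h3)
    -- hypothesis for lipschitz_const
    have hgH : ∀ x ∉ T,
        Tendsto (fun δ : ℝ => δ⁻¹ * (g (x + δ) - g x)) (nhdsWithin 0 (Set.Ioi 0)) (nhds 0) ∨
        Tendsto (fun δ : ℝ => δ⁻¹ * (g (x - δ) - g x)) (nhdsWithin 0 (Set.Ioi 0)) (nhds 0) := by
      intro x hxT
      rcases le_or_gt x α with hxα | hxα
      · right
        apply Tendsto.congr' (f₁ := fun _ => (0:ℝ))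
        · filter_upwards [self_mem_nhdsWithin] with δ (hδ : 0 < δ)
          have e1 : max α (min (x - δ) β) = α := by
            rw [min_eq_left (by linarith), max_eq_left (by linarith)]
          have e2 : max α (min x β) = α := by
            rw [min_eq_left (by linarith), max_eq_left (by linarith)]
          simp [hg, e1, e2]
        · exact tendsto_const_nhds
      rcases le_or_gt β x with hxβ | hxβ
      · left
        apply Tendsto.congr' (f₁ := fun _ => (0:ℝ))
        · filter_upwards [self_mem_nhdsWithin] with δ (hδ : 0 < δ)
          have e1 : max α (min (x + δ) β) = β := by
            rw [min_eq_right (by linarith), max_eq_right hαβ]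
          have e2 : max α (min x β) = β := by
            rw [min_eq_right (by linarith), max_eq_right hαβ]
          simp [hg, e1, e2]
        · exact tendsto_const_nhds
      · -- interior
        have hid : ∀ t : ℝ, α < t → t < β → g t = f t := by
          intro t h1 h2
          simp only [hg]
          rw [min_eq_left h2.le, max_eq_right h1.le]
        have hmemIoo : Set.Ioo (0:ℝ) (min (x - α) (β - x)) ∈ nhdsWithin (0:ℝ) (Set.Ioi 0) := by
          apply Ioo_mem_nhdsGT_of_mem
          constructor
          · exact le_rfl
          · exact lt_min (by linarith) (by linarith)
        rcases H x hxT with hx | hx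
        · left
          apply Tendsto.congr' _ hx
          filter_upwards [hmemIoo] with δ hδ
          have h1 : α < x + δ := by linarith [hδ.1]
          have h2 : x + δ < β := by
            have := hδ.2
            have : δ < β - x := lt_of_lt_of_le this (min_le_right _ _)
            linarith
          rw [hid x hxα hxβ, hid (x + δ) h1 h2]
        · right
          apply Tendsto.congr' _ hx
          filter_upwards [hmemIoo] with δ hδ
          have h1 : α < x - δ := by
            have : δ < x - α := lt_of_lt_of_le hδ.2 (min_le_left _ _)
            linarith
          have h2 : x - δ < β := by linarith [hδ.1]
          rw [hid x hxα hxβ, hid (x - δ) h1 h2]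
    have hgconst := lipschitz_const g hg_lip T hT hgH
    -- x₁ ∈ U : contradiction
    apply hx₁K
    show ∀ᶠ y in nhds x₁, f y = f x₁
    filter_upwards [Metric.ball_mem_nhds x₁ (by linarith : (0:ℝ) < ε₃/2)] with y hy
    rw [Metric.mem_ball, Real.dist_eq] at hy
    have hy' := abs_lt.1 hy
    have e1 : g y = f y := by
      simp only [hg]
      rw [min_eq_left (le_of_lt (by simp only [hβ]; linarith)),
        max_eq_right (le_of_lt (by simp only [hα]; linarith))]
    have e2 : g x₁ = f x₁ := by
      simp only [hg]
      rw [min_eq_left (by simp only [hβ]; linarith), max_eq_right (by simp only [hα]; linarith)]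
    rw [← e1, ← e2]
    exact hgconst y x₁
  intro u v
  rcases le_total u v with h | h
  · exact (hconst u v h (by rw [hKempty]; simp)).symm
  · exact hconst v u h (by rw [hKempty]; simp)

-- ==================== auxiliary lemmas ====================

namespace A3

lemma continuous_pi : Continuous (fun x : A3 => (x.a, x.b, x.c)) := continuous_induced_dom

lemma continuous_a : Continuous (fun x : A3 => x.a) := continuous_fst.comp continuous_pi
lemma continuous_b : Continuous (fun x : A3 => x.b) :=
  (continuous_fst.comp continuous_snd).comp continuous_pi
lemma continuous_c : Continuous (fun x : A3 => x.c) :=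
  (continuous_snd.comp continuous_snd).comp continuous_pi

lemma continuous_into {X : Type*} [TopologicalSpace X] {f : X → A3}
    (h1 : Continuous fun x => (f x).a) (h2 : Continuous fun x => (f x).b)
    (h3 : Continuous fun x => (f x).c) : Continuous f :=
  continuous_induced_rng.2 (h1.prodMk (h2.prodMk h3))

instance : T2Space A3 := by
  have hinj : Function.Injective (fun x : A3 => (x.a, x.b, x.c)) := by
    intro x y h
    simp only [Prod.mk.injEq] at h
    ext <;> tauto
  exact (Topology.IsEmbedding.mk ⟨rfl⟩ hinj).t2Space

lemma sub_a (x y : A3) : (x - y).a = x.a - y.a := by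
  rw [sub_eq_add_neg, sub_eq_add_neg]; rfl
lemma sub_b (x y : A3) : (x - y).b = x.b - y.b := by
  rw [sub_eq_add_neg, sub_eq_add_neg]; rfl
lemma sub_c (x y : A3) : (x - y).c = x.c - y.c := by
  rw [sub_eq_add_neg, sub_eq_add_neg]; rfl

lemma smul_rho_sq_a (z : ℂ) : (z • ρ^2).a = 0 := by rw [rho_sq]; simp
lemma smul_rho_sq_b (z : ℂ) : (z • ρ^2).b = 0 := by rw [rho_sq]; simp
lemma smul_rho_sq_c (z : ℂ) : (z • ρ^2).c = z := by rw [rho_sq]; simp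

end A3

/-- transfer a complex one-sided limit to its real part -/
lemma re_transfer {G : ℝ → ℂ}
    (h : Tendsto (fun δ : ℝ => (δ : ℂ)⁻¹ * G δ) (nhdsWithin 0 (Set.Ioi 0)) (nhds 0)) :
    Tendsto (fun δ : ℝ => δ⁻¹ * (G δ).re) (nhdsWithin 0 (Set.Ioi 0)) (nhds 0) := by
  have h2 := (Complex.continuous_re.tendsto 0).comp h
  simp only [Complex.zero_re] at h2
  refine h2.congr fun δ => ?_
  show ((δ : ℂ)⁻¹ * G δ).re = _
  rw [← Complex.ofReal_inv, Complex.re_ofReal_mul]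

lemma im_transfer {G : ℝ → ℂ}
    (h : Tendsto (fun δ : ℝ => (δ : ℂ)⁻¹ * G δ) (nhdsWithin 0 (Set.Ioi 0)) (nhds 0)) :
    Tendsto (fun δ : ℝ => δ⁻¹ * (G δ).im) (nhdsWithin 0 (Set.Ioi 0)) (nhds 0) := by
  have h2 := (Complex.continuous_im.tendsto 0).comp h
  simp only [Complex.zero_im] at h2
  refine h2.congr fun δ => ?_
  show ((δ : ℂ)⁻¹ * G δ).im = _
  rw [← Complex.ofReal_inv, Complex.im_ofReal_mul]


set_option maxHeartbeats 1000000 in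
/-- Menshov–Trokhimchuk-type rigidity along the radical direction:
if `Φ = ρ²Φ₂` is continuous on a domain `Ω ⊆ E₃` convex in the direction of `L = ℝ·l`
(`l` a direction vector of `E₃ ∩ I`) and satisfies the Menshov-type condition off a
countable set, then `Φ₂` is constant on line sections and `Φ₂ = F₂ ∘ f` for a
continuous `F₂` on `D = f(Ω)`. -/
theorem stmt17 (E₃ : Submodule ℝ A3) (hdim : Module.finrank ℝ E₃ = 3)
    (hsurj : ∀ w : ℂ, ∃ ζ ∈ E₃, A3.fl ζ = w)
    (l : A3) (hlE : l ∈ E₃) (hlI : A3.fl l = 0) (hl0 : l ≠ 0)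
    (hlspan : ∀ x ∈ E₃, A3.fl x = 0 → ∃ c : ℝ, x = c • l)
    (Ω : Set A3) (hΩE : Ω ⊆ (E₃ : Set A3)) (hopen : IsOpen {x : E₃ | (x : A3) ∈ Ω})
    (hconn : IsPreconnected Ω)
    (hconv : ∀ ζ₁ ∈ Ω, ∀ ζ₂ ∈ Ω, (∃ c : ℝ, ζ₂ = ζ₁ + c • l) → segment ℝ ζ₁ ζ₂ ⊆ Ω)
    (Φ₂ : A3 → ℂ) (hcont : ContinuousOn Φ₂ Ω)
    (Φ : A3 → A3) (hΦ : ∀ ζ, Φ ζ = Φ₂ ζ • A3.ρ ^ 2)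
    (S : Set A3) (hS : S.Countable)
    (hK : ∀ ζ ∈ Ω \ S, ∃ Φs : A3, ∃ h₁ h₂ h₃ : A3,
      h₁ ∈ E₃ ∧ h₂ ∈ E₃ ∧ LinearIndependent ℝ ![h₁, h₂, h₃] ∧
      (h₃ = l ∨ h₃ = -l) ∧
      ∀ h ∈ ({h₁, h₂, h₃} : Set A3),
        Filter.Tendsto (fun δ : ℝ => δ⁻¹ • (Φ (ζ + δ • h) - Φ ζ))
          (nhdsWithin 0 (Set.Ioi 0)) (nhds (h * Φs))) :
    (∀ ζ₁ ∈ Ω, ∀ ζ₂ ∈ Ω, A3.fl ζ₁ = A3.fl ζ₂ → Φ₂ ζ₁ = Φ₂ ζ₂) ∧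
    ∃ F₂ : ℂ → ℂ, ContinuousOn F₂ (A3.fl '' Ω) ∧ ∀ ζ ∈ Ω, Φ₂ ζ = F₂ (A3.fl ζ) := by
  classical
  -- Φ difference in components
  have hΦsub : ∀ x y : A3, Φ x - Φ y = (Φ₂ x - Φ₂ y) • A3.ρ ^ 2 := by
    intro x y; rw [hΦ, hΦ, ← sub_smul]
  -- injectivity of the line parametrization
  have hlcomp : l.a ≠ 0 ∨ l.b ≠ 0 ∨ l.c ≠ 0 := by
    by_contra hcon
    push_neg at hcon
    exact hl0 (by ext <;> simp [hcon.1, hcon.2.1, hcon.2.2])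
  have hinj : ∀ ζ : A3, Function.Injective (fun t : ℝ => ζ + t • l) := by
    intro ζ t₁ t₂ h
    simp only at h
    have h2 : t₁ • l = t₂ • l := add_left_cancel h
    have key : ∀ z : ℂ, (t₁:ℂ) * z = (t₂:ℂ) * z → z ≠ 0 → t₁ = t₂ := fun z hz hz0 =>
      Complex.ofReal_inj.1 (mul_right_cancel₀ hz0 hz)
    rcases hlcomp with hc | hc | hc
    · exact key l.a (by simpa using congrArg A3.a h2) hc
    · exact key l.b (by simpa using congrArg A3.b h2) hc
    · exact key l.c (by simpa using congrArg A3.c h2) hc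
  -- continuity of affine line maps
  have hlinecont : ∀ ζ : A3, Continuous (fun t : ℝ => ζ + t • l) := by
    intro ζ
    apply A3.continuous_into
    · simp only [A3.add_a, A3.smulR_a]
      exact continuous_const.add (Complex.continuous_ofReal.mul continuous_const)
    · simp only [A3.add_b, A3.smulR_b]
      exact continuous_const.add (Complex.continuous_ofReal.mul continuous_const)
    · simp only [A3.add_c, A3.smulR_c]
      exact continuous_const.add (Complex.continuous_ofReal.mul continuous_const)
  -- the good-point analysis
  have hgood : ∀ ζ ∈ Ω \ S, ∃ h₃ : A3, (h₃ = l ∨ h₃ = -l) ∧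
      Tendsto (fun δ : ℝ => (δ:ℂ)⁻¹ * (Φ₂ (ζ + δ • h₃) - Φ₂ ζ))
        (nhdsWithin 0 (Set.Ioi 0)) (nhds 0) := by
    intro ζ hζ
    obtain ⟨Φs, h₁, h₂, h₃, h₁E, h₂E, hind, hsgn, hlim⟩ := hK ζ hζ
    have hab : ∀ h ∈ ({h₁, h₂, h₃} : Set A3), (h * Φs).a = 0 ∧ (h * Φs).b = 0 := by
      intro h hm
      have hl := hlim h hm
      constructor
      · have t1 := (A3.continuous_a.tendsto _).comp hl
        have t2 : (fun δ : ℝ => (δ⁻¹ • (Φ (ζ + δ • h) - Φ ζ)).a) = fun _ : ℝ => (0:ℂ) := by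
          funext δ
          rw [A3.smulR_a, hΦsub, A3.smul_rho_sq_a, mul_zero]
        rw [show ((fun x : A3 => x.a) ∘ fun δ : ℝ => δ⁻¹ • (Φ (ζ + δ • h) - Φ ζ)) =
            (fun δ : ℝ => (δ⁻¹ • (Φ (ζ + δ • h) - Φ ζ)).a) from rfl, t2] at t1
        exact tendsto_nhds_unique t1 tendsto_const_nhds
      · have t1 := (A3.continuous_b.tendsto _).comp hl
        have t2 : (fun δ : ℝ => (δ⁻¹ • (Φ (ζ + δ • h) - Φ ζ)).b) = fun _ : ℝ => (0:ℂ) := by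
          funext δ
          rw [A3.smulR_b, hΦsub, A3.smul_rho_sq_b, mul_zero]
        rw [show ((fun x : A3 => x.b) ∘ fun δ : ℝ => δ⁻¹ • (Φ (ζ + δ • h) - Φ ζ)) =
            (fun δ : ℝ => (δ⁻¹ • (Φ (ζ + δ • h) - Φ ζ)).b) from rfl, t2] at t1
        exact tendsto_nhds_unique t1 tendsto_const_nhds
    -- one of h₁, h₂ has nonzero a-component
    have hex : h₁.a ≠ 0 ∨ h₂.a ≠ 0 := by
      by_contra hcon
      push_neg at hcon
      obtain ⟨c₁, hc₁⟩ := hlspan h₁ h₁E hcon.1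
      obtain ⟨c₂, hc₂⟩ := hlspan h₂ h₂E hcon.2
      have hzero := Fintype.linearIndependent_iff.1 hind ![c₂, -c₁, 0] ?_
      · have e1 : c₁ = 0 := by have := hzero 1; simpa using this
        have e2 : h₁ = 0 := by rw [hc₁, e1, zero_smul]
        exact hind.ne_zero 0 (by simpa using e2)
      · simp [Fin.sum_univ_three, hc₁, hc₂, smul_smul, mul_comm]
    obtain ⟨h0, h0mem, h0a⟩ : ∃ h0 ∈ ({h₁, h₂, h₃} : Set A3), h0.a ≠ 0 := by
      rcases hex with h | h
      · exact ⟨h₁, by simp, h⟩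
      · exact ⟨h₂, by simp, h⟩
    have hΦsa : Φs.a = 0 := by
      have := (hab h0 h0mem).1
      rw [A3.mul_a] at this
      exact (mul_eq_zero.1 this).resolve_left h0a
    have hΦsb : Φs.b = 0 := by
      have := (hab h0 h0mem).2
      rw [A3.mul_b, hΦsa, mul_zero, add_zero] at this
      exact (mul_eq_zero.1 this).resolve_left h0a
    have h₃a : h₃.a = 0 := by
      rcases hsgn with rfl | rfl
      · exact hlI
      · show (-l).a = 0
        rw [A3.neg_a]
        simp [show l.a = 0 from hlI]
    have hc3 : (h₃ * Φs).c = 0 := by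
      rw [A3.mul_c, h₃a, hΦsa, hΦsb]; ring
    refine ⟨h₃, hsgn, ?_⟩
    have hlim3 := hlim h₃ (by simp)
    have t1 := (A3.continuous_c.tendsto _).comp hlim3
    rw [hc3] at t1
    refine t1.congr fun δ => ?_
    show ((δ:ℝ)⁻¹ • (Φ (ζ + δ • h₃) - Φ ζ)).c = _
    rw [A3.smulR_c, hΦsub, A3.smul_rho_sq_c, Complex.ofReal_inv]
  -- ====== Part 1 ======
  have part1 : ∀ ζ₁ ∈ Ω, ∀ ζ₂ ∈ Ω, A3.fl ζ₁ = A3.fl ζ₂ → Φ₂ ζ₁ = Φ₂ ζ₂ := by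
    have main : ∀ ζ₁ ∈ Ω, ∀ ζ₂ ∈ Ω, ∀ c : ℝ, 0 ≤ c → ζ₂ = ζ₁ + c • l → Φ₂ ζ₁ = Φ₂ ζ₂ := by
      intro ζ₁ h1 ζ₂ h2 c hc0 hζ2
      -- P is open
      set q : ℝ → E₃ := fun t => ⟨ζ₁ + t • l,
        E₃.add_mem (hΩE h1) (E₃.smul_mem t hlE)⟩ with hq
      have hqcont : Continuous q := Continuous.subtype_mk (hlinecont ζ₁) _
      set P : Set ℝ := {t | ζ₁ + t • l ∈ Ω} with hP
      have hPopen : IsOpen P := by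
        have : P = q ⁻¹' {x : E₃ | (x : A3) ∈ Ω} := rfl
        rw [this]
        exact hopen.preimage hqcont
      have h0P : (0:ℝ) ∈ P := by
        show ζ₁ + (0:ℝ) • l ∈ Ω
        rw [zero_smul, add_zero]; exact h1
      have hcP : c ∈ P := by
        show ζ₁ + c • l ∈ Ω
        rw [← hζ2]; exact h2
      obtain ⟨η₀, hη₀, hb0⟩ := Metric.isOpen_iff.1 hPopen 0 h0P
      obtain ⟨η₁, hη₁, hb1⟩ := Metric.isOpen_iff.1 hPopen c hcP
      set A : ℝ := -(η₀/2) with hA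
      set B : ℝ := c + η₁/2 with hB
      have hAP : A ∈ P := by
        apply hb0
        rw [Metric.mem_ball, Real.dist_eq, sub_zero, hA, abs_neg, abs_of_pos (by linarith)]
        linarith
      have hBP : B ∈ P := by
        apply hb1
        rw [Metric.mem_ball, Real.dist_eq, hB, show c + η₁/2 - c = η₁/2 by ring,
          abs_of_pos (by linarith)]
        linarith
      have hA0 : A < 0 := by rw [hA]; linarith
      have hBc : c < B := by rw [hB]; linarith
      have hAB : A < B := by linarith
      -- all of [A,B] is inside Ω
      have hseg : ∀ s ∈ Set.Icc A B, ζ₁ + s • l ∈ Ω := by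
        intro s hs
        have hc' : (ζ₁ + B • l) = (ζ₁ + A • l) + (B - A) • l := by
          rw [sub_smul]; abel
        have hsub := hconv (ζ₁ + A • l) hAP (ζ₁ + B • l) hBP ⟨B - A, hc'⟩
        apply hsub
        rw [segment_eq_image']
        have hdiff : (ζ₁ + B • l) - (ζ₁ + A • l) = (B - A) • l := by
          rw [sub_smul]; abel
        refine ⟨(s - A)/(B - A), ⟨?_, ?_⟩, ?_⟩
        · apply div_nonneg <;> linarith [hs.1]
        · rw [div_le_one (by linarith)]; linarith [hs.2]
        · show (ζ₁ + A • l) + ((s - A)/(B - A)) • ((ζ₁ + B • l) - (ζ₁ + A • l)) = ζ₁ + s • l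
          rw [hdiff, smul_smul, div_mul_cancel₀ _ (by linarith : B - A ≠ 0), sub_smul]
          abel
      -- clamped parametrized function
      set w : ℝ → ℝ := fun t => max A (min t B) with hw
      have hwcont : Continuous w := continuous_const.max (continuous_id.min continuous_const)
      have hwmem : ∀ t, w t ∈ Set.Icc A B := fun t =>
        ⟨le_max_left _ _, max_le hAB.le (min_le_right _ _)⟩
      set Fc : ℝ → ℂ := fun t => Φ₂ (ζ₁ + (w t) • l) with hFc
      have hline_w : Continuous (fun t : ℝ => ζ₁ + (w t) • l) := (hlinecont ζ₁).comp hwcont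
      have hFccont : Continuous Fc :=
        hcont.comp_continuous hline_w (fun t => hseg (w t) (hwmem t))
      set T : Set ℝ := {t | ζ₁ + t • l ∈ S} with hT
      have hTc : T.Countable := hS.preimage (hinj ζ₁)
      have HC : ∀ x ∉ T,
          Tendsto (fun δ : ℝ => (δ:ℂ)⁻¹ * (Fc (x + δ) - Fc x))
            (nhdsWithin 0 (Set.Ioi 0)) (nhds 0) ∨
          Tendsto (fun δ : ℝ => (δ:ℂ)⁻¹ * (Fc (x - δ) - Fc x))
            (nhdsWithin 0 (Set.Ioi 0)) (nhds 0) := by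
        intro x hxT
        rcases le_or_gt x A with hxA | hxA
        · right
          have hev : (fun δ : ℝ => (δ:ℂ)⁻¹ * (Fc (x - δ) - Fc x)) =ᶠ[nhdsWithin 0 (Set.Ioi 0)]
              (fun _ : ℝ => (0:ℂ)) := by
            filter_upwards [self_mem_nhdsWithin] with δ (hδ : 0 < δ)
            have e1 : w (x - δ) = A := by
              rw [hw]
              simp only
              rw [min_eq_left (by linarith), max_eq_left (by linarith)]
            have e2 : w x = A := by
              rw [hw]
              simp only
              rw [min_eq_left (by linarith), max_eq_left hxA]
            simp only [hFc, e1, e2, sub_self, mul_zero]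
          exact (tendsto_congr' hev).2 tendsto_const_nhds
        rcases le_or_gt B x with hxB | hxB
        · left
          have hev : (fun δ : ℝ => (δ:ℂ)⁻¹ * (Fc (x + δ) - Fc x)) =ᶠ[nhdsWithin 0 (Set.Ioi 0)]
              (fun _ : ℝ => (0:ℂ)) := by
            filter_upwards [self_mem_nhdsWithin] with δ (hδ : 0 < δ)
            have e1 : w (x + δ) = B := by
              rw [hw]
              simp only
              rw [min_eq_right (by linarith), max_eq_right hAB.le]
            have e2 : w x = B := by
              rw [hw]
              simp only
              rw [min_eq_right hxB, max_eq_right hAB.le]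
            simp only [hFc, e1, e2, sub_self, mul_zero]
          exact (tendsto_congr' hev).2 tendsto_const_nhds
        · have hxΩ : ζ₁ + x • l ∈ Ω := hseg x ⟨hxA.le, hxB.le⟩
          have hxS : ζ₁ + x • l ∉ S := hxT
          obtain ⟨h₃, hsgn3, hlim3⟩ := hgood (ζ₁ + x • l) ⟨hxΩ, hxS⟩
          have hIoo : Set.Ioo (0:ℝ) (min (x - A) (B - x)) ∈ nhdsWithin (0:ℝ) (Set.Ioi 0) :=
            Ioo_mem_nhdsGT_of_mem ⟨le_rfl, lt_min (by linarith) (by linarith)⟩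
          have ewx : w x = x := by
            rw [hw]; simp only
            rw [min_eq_left hxB.le, max_eq_right hxA.le]
          rcases hsgn3 with h3l | h3l
          · left
            rw [h3l] at hlim3
            refine (tendsto_congr' ?_).2 hlim3
            filter_upwards [hIoo] with δ hδ
            have hδB : x + δ < B := by
              have := lt_of_lt_of_le hδ.2 (min_le_right _ _); linarith
            have e1 : w (x + δ) = x + δ := by
              rw [hw]; simp only
              rw [min_eq_left hδB.le, max_eq_right (by linarith [hδ.1])]
            have e3 : (ζ₁ + x • l) + δ • l = ζ₁ + (x + δ) • l := by
              rw [add_smul]; abel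
            have r1 : Fc (x + δ) = Φ₂ ((ζ₁ + x • l) + δ • l) := by
              show Φ₂ (ζ₁ + (w (x + δ)) • l) = _
              rw [e1, e3]
            have r2 : Fc x = Φ₂ (ζ₁ + x • l) := by
              show Φ₂ (ζ₁ + (w x) • l) = _
              rw [ewx]
            rw [r1, r2]
          · right
            rw [h3l] at hlim3
            refine (tendsto_congr' ?_).2 hlim3
            filter_upwards [hIoo] with δ hδ
            have hδA : A < x - δ := by
              have := lt_of_lt_of_le hδ.2 (min_le_left _ _); linarith
            have e1 : w (x - δ) = x - δ := by
              rw [hw]; simp only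
              rw [min_eq_left (by linarith [hδ.1] : x - δ ≤ B), max_eq_right hδA.le]
            have e3 : (ζ₁ + x • l) + δ • (-l) = ζ₁ + (x - δ) • l := by
              rw [smul_neg, sub_smul]; abel
            have r1 : Fc (x - δ) = Φ₂ ((ζ₁ + x • l) + δ • (-l)) := by
              show Φ₂ (ζ₁ + (w (x - δ)) • l) = _
              rw [e1, e3]
            have r2 : Fc x = Φ₂ (ζ₁ + x • l) := by
              show Φ₂ (ζ₁ + (w x) • l) = _
              rw [ewx]
            rw [r1, r2]
      -- apply the 1-dimensional theorem to real and imaginary parts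
      have Hre : ∀ x ∉ T,
          Tendsto (fun δ : ℝ => δ⁻¹ * ((Fc (x + δ)).re - (Fc x).re))
            (nhdsWithin 0 (Set.Ioi 0)) (nhds 0) ∨
          Tendsto (fun δ : ℝ => δ⁻¹ * ((Fc (x - δ)).re - (Fc x).re))
            (nhdsWithin 0 (Set.Ioi 0)) (nhds 0) := by
        intro x hx
        refine (HC x hx).imp (fun h => ?_) (fun h => ?_)
        · exact (re_transfer h).congr fun δ => by rw [Complex.sub_re]
        · exact (re_transfer h).congr fun δ => by rw [Complex.sub_re]
      have Him : ∀ x ∉ T,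
          Tendsto (fun δ : ℝ => δ⁻¹ * ((Fc (x + δ)).im - (Fc x).im))
            (nhdsWithin 0 (Set.Ioi 0)) (nhds 0) ∨
          Tendsto (fun δ : ℝ => δ⁻¹ * ((Fc (x - δ)).im - (Fc x).im))
            (nhdsWithin 0 (Set.Ioi 0)) (nhds 0) := by
        intro x hx
        refine (HC x hx).imp (fun h => ?_) (fun h => ?_)
        · exact (im_transfer h).congr fun δ => by rw [Complex.sub_im]
        · exact (im_transfer h).congr fun δ => by rw [Complex.sub_im]
      have hre := key1d (fun t => (Fc t).re) (Complex.continuous_re.comp hFccont) T hTc Hre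
      have him := key1d (fun t => (Fc t).im) (Complex.continuous_im.comp hFccont) T hTc Him
      have ew0 : w 0 = 0 := by
        rw [hw]; simp only
        rw [min_eq_left (by linarith), max_eq_right (by linarith)]
      have ewc : w c = c := by
        rw [hw]; simp only
        rw [min_eq_left hBc.le, max_eq_right (by linarith)]
      have eF0 : Fc 0 = Φ₂ ζ₁ := by
        show Φ₂ (ζ₁ + (w 0) • l) = _
        rw [ew0, zero_smul, add_zero]
      have eFc : Fc c = Φ₂ ζ₂ := by
        show Φ₂ (ζ₁ + (w c) • l) = _
        rw [ewc, ← hζ2]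
      have hre' : (Fc 0).re = (Fc c).re := hre 0 c
      have him' : (Fc 0).im = (Fc c).im := him 0 c
      rw [eF0, eFc] at hre' him'
      exact Complex.ext hre' him'
    intro ζ₁ h1 ζ₂ h2 hfl
    have hmem : ζ₂ - ζ₁ ∈ E₃ := E₃.sub_mem (hΩE h2) (hΩE h1)
    have hfl0 : A3.fl (ζ₂ - ζ₁) = 0 := by
      show (ζ₂ - ζ₁).a = 0
      rw [A3.sub_a]
      have : ζ₁.a = ζ₂.a := hfl
      rw [this, sub_self]
    obtain ⟨c, hc⟩ := hlspan _ hmem hfl0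
    have hζ2 : ζ₂ = ζ₁ + c • l := by
      rw [← hc]; abel
    rcases le_or_gt 0 c with hsgn | hsgn
    · exact main ζ₁ h1 ζ₂ h2 c hsgn hζ2
    · refine (main ζ₂ h2 ζ₁ h1 (-c) (by linarith) ?_).symm
      rw [hζ2, neg_smul]; abel
  refine ⟨part1, ?_⟩
  -- ====== Part 2 ======
  obtain ⟨e₁, he1E, he1⟩ := hsurj 1
  obtain ⟨eI, heIE, heI⟩ := hsurj Complex.I
  set sec : ℂ → A3 := fun z => z.re • e₁ + z.im • eI with hsec
  have hsecE : ∀ z, sec z ∈ E₃ := fun z =>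
    E₃.add_mem (E₃.smul_mem _ he1E) (E₃.smul_mem _ heIE)
  have hsecfl : ∀ z, A3.fl (sec z) = z := by
    intro z
    show (z.re • e₁ + z.im • eI).a = z
    rw [A3.add_a, A3.smulR_a, A3.smulR_a, show e₁.a = 1 from he1,
      show eI.a = Complex.I from heI, mul_one]
    exact Complex.re_add_im z
  have hseccont : Continuous sec := by
    apply A3.continuous_into
    · simp only [hsec, A3.add_a, A3.smulR_a]
      exact ((Complex.continuous_ofReal.comp Complex.continuous_re).mul continuous_const).add
        ((Complex.continuous_ofReal.comp Complex.continuous_im).mul continuous_const)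
    · simp only [hsec, A3.add_b, A3.smulR_b]
      exact ((Complex.continuous_ofReal.comp Complex.continuous_re).mul continuous_const).add
        ((Complex.continuous_ofReal.comp Complex.continuous_im).mul continuous_const)
    · simp only [hsec, A3.add_c, A3.smulR_c]
      exact ((Complex.continuous_ofReal.comp Complex.continuous_re).mul continuous_const).add
        ((Complex.continuous_ofReal.comp Complex.continuous_im).mul continuous_const)
  set F₂ : ℂ → ℂ := fun z => if h : ∃ ζ ∈ Ω, A3.fl ζ = z then Φ₂ h.choose else 0 with hF₂
  have hF₂eq : ∀ ζ ∈ Ω, F₂ (A3.fl ζ) = Φ₂ ζ := by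
    intro ζ hζ
    have hex : ∃ ζ' ∈ Ω, A3.fl ζ' = A3.fl ζ := ⟨ζ, hζ, rfl⟩
    rw [hF₂]
    simp only [dif_pos hex]
    obtain ⟨hmem, hfl⟩ := hex.choose_spec
    exact part1 _ hmem _ hζ hfl
  refine ⟨F₂, ?_, fun ζ hζ => (hF₂eq ζ hζ).symm⟩
  intro z₀ hz₀
  obtain ⟨ζ₀, hζ₀, rfl⟩ := hz₀
  set Lmap : ℂ → A3 := fun z => ζ₀ + sec (z - A3.fl ζ₀) with hL
  have hLcont : Continuous Lmap := by
    apply A3.continuous_into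
    · simp only [hL, A3.add_a]
      exact continuous_const.add ((A3.continuous_a.comp hseccont).comp
        (continuous_id.sub continuous_const))
    · simp only [hL, A3.add_b]
      exact continuous_const.add ((A3.continuous_b.comp hseccont).comp
        (continuous_id.sub continuous_const))
    · simp only [hL, A3.add_c]
      exact continuous_const.add ((A3.continuous_c.comp hseccont).comp
        (continuous_id.sub continuous_const))
  have hLmem : ∀ z, Lmap z ∈ E₃ := fun z => E₃.add_mem (hΩE hζ₀) (hsecE _)
  set q2 : ℂ → E₃ := fun z => ⟨Lmap z, hLmem z⟩ with hq2
  have hq2cont : Continuous q2 := Continuous.subtype_mk hLcont _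
  set V : Set ℂ := {z | Lmap z ∈ Ω} with hV
  have hVopen : IsOpen V := by
    have : V = q2 ⁻¹' {x : E₃ | (x : A3) ∈ Ω} := rfl
    rw [this]
    exact hopen.preimage hq2cont
  have hsec0 : sec 0 = 0 := by
    rw [hsec]
    show (Complex.re 0) • e₁ + (Complex.im 0) • eI = 0
    simp
  have hz₀V : A3.fl ζ₀ ∈ V := by
    show Lmap (A3.fl ζ₀) ∈ Ω
    rw [hL]
    simp only [sub_self, hsec0, add_zero]
    exact hζ₀
  have hflL : ∀ z, A3.fl (Lmap z) = z := by
    intro z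
    show (ζ₀ + sec (z - A3.fl ζ₀)).a = z
    rw [A3.add_a, show (sec (z - A3.fl ζ₀)).a = z - A3.fl ζ₀ from hsecfl _]
    show A3.fl ζ₀ + (z - A3.fl ζ₀) = z
    ring
  have hagree : ∀ z ∈ V, F₂ z = Φ₂ (Lmap z) := by
    intro z hz
    have := hF₂eq (Lmap z) hz
    rw [hflL] at this
    exact this
  have hcontV : ContinuousOn (fun z => Φ₂ (Lmap z)) V :=
    hcont.comp hLcont.continuousOn fun z hz => hz
  have hca : ContinuousAt (fun z => Φ₂ (Lmap z)) (A3.fl ζ₀) :=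
    hcontV.continuousAt (hVopen.mem_nhds hz₀V)
  have hev : F₂ =ᶠ[nhds (A3.fl ζ₀)] fun z => Φ₂ (Lmap z) := by
    filter_upwards [hVopen.mem_nhds hz₀V] with z hz
    exact hagree z hz
  have : ContinuousAt F₂ (A3.fl ζ₀) := hca.congr hev.symm
  exact this.continuousWithinAt
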